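/- Let V be a real normed space, let P₁ and P₂ be nonempty compact subsets of V, and let f be a continuous linear functional on V with f(x) = 0 for all x ∈ P₁ and f(y) ≥ K for all y ∈ P₂, for some constant K > 0. Then for every ε₀ > 0 there exists ε > 0 such that every λ in the convex join of P₁ and P₂ whose distance to P₁ is less than ε can be written as λ = (1−t)x + ty with x ∈ P₁, y ∈ P₂ and 0 ≤ t ≤ ε₀. -/
import Mathlib


/-- Let `P₁, P₂` be nonempty compact subsets of a real normed space and
`f` a continuous linear functional vanishing on `P₁` and bounded below by `K > 0` on
`P₂`. Then for every `ε₀ > 0` there is `ε > 0` such that every point of the convex join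
of `P₁` and `P₂` at distance less than `ε` from `P₁` can be written as `(1−t)x + ty` with
`x ∈ P₁`, `y ∈ P₂` and `0 ≤ t ≤ ε₀`. -/
theorem near_points_of_convexJoin_have_small_parameter
    (V : Type*) [NormedAddCommGroup V] [NormedSpace ℝ V]
    (P₁ P₂ : Set V) (hP₁ : P₁.Nonempty) (hP₂ : P₂.Nonempty)
    (hcP₁ : IsCompact P₁) (hcP₂ : IsCompact P₂)
    (f : V →L[ℝ] ℝ) (K : ℝ) (hK : 0 < K)
    (hfP₁ : ∀ x ∈ P₁, f x = 0) (hfP₂ : ∀ y ∈ P₂, K ≤ f y) :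
    ∀ ε₀ : ℝ, 0 < ε₀ → ∃ ε : ℝ, 0 < ε ∧
      ∀ l ∈ convexJoin ℝ P₁ P₂, Metric.infDist l P₁ < ε →
        ∃ x ∈ P₁, ∃ y ∈ P₂, ∃ t : ℝ, 0 ≤ t ∧ t ≤ ε₀ ∧ l = (1 - t) • x + t • y := by
  intro ε₀ hε₀
  obtain ⟨y₀, hy₀⟩ := hP₂
  have hf0 : f ≠ 0 := by
    intro h
    have := hfP₂ y₀ hy₀
    rw [h] at this
    simp at this
    linarith
  have hfn : 0 < ‖f‖ := norm_pos_iff.mpr hf0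
  refine ⟨ε₀ * K / ‖f‖, by positivity, ?_⟩
  intro l hl hdist
  rw [mem_convexJoin] at hl
  obtain ⟨x, hx, y, hy, a, b, ha, hb, hab, hxy⟩ := hl
  refine ⟨x, hx, y, hy, b, hb, ?_, ?_⟩
  · -- show b ≤ ε₀ using infDist bound
    by_contra hbe
    push_neg at hbe
    obtain ⟨p, hp, hdp⟩ := (Metric.infDist_lt_iff hP₁).mp hdist
    have h1 : b * K ≤ f l := by
      rw [← hxy]
      simp only [map_add, map_smul, smul_eq_mul]
      rw [hfP₁ x hx]
      have := hfP₂ y hy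
      nlinarith
    have h2 : f (l - p) ≤ ‖f‖ * ‖l - p‖ :=
      le_trans (le_abs_self _) (f.le_opNorm _)
    rw [map_sub, hfP₁ p hp, sub_zero] at h2
    rw [dist_eq_norm] at hdp
    have h3 : ‖l - p‖ < ε₀ * K / ‖f‖ := hdp
    have h4 : ‖f‖ * ‖l - p‖ < ε₀ * K := by
      rw [lt_div_iff₀ hfn] at h3
      nlinarith
    nlinarith
  · rw [← hxy]
    have hA : a = 1 - b := by linarith
    rw [hA]
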